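/- Let μ be the measure on ℝ² defined by μ(A) = ∫_{A ∩ {x : x₂ = 0}} |x₁|^{−1} dH¹(x), i.e. μ has density 1/|x₁| with respect to the 1-dimensional Hausdorff measure restricted to the line {x₂ = 0}. Then (with n = 1, m = 2) the integral Menger curvature satisfies M_{K₁²}(μ) = 0, while μ(B(0,δ)) = ∞ for every δ > 0. -/

import Mathlib

open MeasureTheory Metric ENNReal NNReal Filter

noncomputable section

/-- `ℝ^m` as a Euclidean space. -/
abbrev Euc (m : ℕ) : Type := EuclideanSpace ℝ (Fin m)

/-- The support of a measure: points all of whose neighborhoods have positive measure. -/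
def msupport {m : ℕ} (μ : Measure (Euc m)) : Set (Euc m) :=
  {x | ∀ r > (0:ℝ), 0 < μ (ball x r)}

/-- Upper `n`-density `Θ^{n,*}(μ,x)`. -/
def upperDensity {m : ℕ} (n : ℕ) (μ : Measure (Euc m)) (x : Euc m) : ℝ≥0∞ :=
  Filter.limsup (fun r : ℝ => μ (closedBall x r) / ENNReal.ofReal (r ^ n))
    (nhdsWithin 0 (Set.Ioi 0))

/-- Lower `n`-density `Θ^n_*(μ,x)`. -/
def lowerDensity {m : ℕ} (n : ℕ) (μ : Measure (Euc m)) (x : Euc m) : ℝ≥0∞ :=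
  Filter.liminf (fun r : ℝ => μ (closedBall x r) / ENNReal.ofReal (r ^ n))
    (nhdsWithin 0 (Set.Ioi 0))

/-- `h_min` of a tuple of points: the least distance from a point to the affine span of
the remaining ones. -/
def hmin {m k : ℕ} (X : Fin k → Euc m) : ℝ :=
  ⨅ i : Fin k, Metric.infDist (X i) (affineSpan ℝ (X '' ({i}ᶜ : Set (Fin k))) : Set (Euc m))

/-- The Lerman–Whitehouse integrand `K₁`. -/
def K1 {m : ℕ} (n : ℕ) (X : Fin (n+2) → Euc m) : ℝ :=
  if 0 < μH[(n+1 : ℝ)] (convexHull ℝ (Set.range X)) then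
    (μH[(n+1 : ℝ)] (convexHull ℝ (Set.range X))).toReal /
      Metric.diam (Set.range X) ^ ((((n:ℝ)+1) * ((n:ℝ)+2)) / 2)
  else 0

/-- The Lerman–Whitehouse integrand `K₂`. -/
def K2 {m : ℕ} (n : ℕ) (X : Fin (n+2) → Euc m) : ℝ :=
  if 0 < μH[(n+1 : ℝ)] (convexHull ℝ (Set.range X)) then
    hmin X / Metric.diam (Set.range X) ^ (((n:ℝ) * ((n:ℝ)+1) + 2) / 2)
  else 0

/-- Integral Menger curvature `M_{K^p}(μ)`. -/
def mengerCurv {m : ℕ} (n : ℕ) (p : ℝ) (K : (Fin (n+2) → Euc m) → ℝ)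
    (μ : Measure (Euc m)) : ℝ≥0∞ :=
  ∫⁻ X, ENNReal.ofReal (K X ^ p) ∂(Measure.pi fun _ : Fin (n+2) => μ)

/-- Pointwise Menger curvature `curv^n_{K^p;μ}(x,r)`. -/
def ptMengerCurv {m : ℕ} (n : ℕ) (p : ℝ) (K : (Fin (n+2) → Euc m) → ℝ)
    (μ : Measure (Euc m)) (x : Euc m) (r : ℝ) : ℝ≥0∞ :=
  ∫⁻ Y, ENNReal.ofReal (K (Fin.cons x Y) ^ p)
    ∂(Measure.pi fun _ : Fin (n+1) => μ.restrict (closedBall x r))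

/-- A `(μ,p)`-proper integrand with constants `c` and `ℓ` in condition (2). -/
structure IsProperIntegrand {m : ℕ} (n : ℕ) (μ : Measure (Euc m)) (p : ℝ)
    (K : (Fin (n+2) → Euc m) → ℝ) (c ℓ : ℝ) : Prop where
  nonneg : ∀ X, 0 ≤ K X
  one_le_c : 1 ≤ c
  one_le_ell : 1 ≤ ℓ
  aemeasurable : AEMeasurable K (Measure.pi fun _ : Fin (n+2) => μ)
  simplex_bound : ∀ t > (0:ℝ), ∀ C ≥ (1:ℝ), ∀ x : Euc m, ∀ X : Fin (n+1) → Euc m,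
    (∀ i, X i ∈ closedBall x (C * t)) → t / C ≤ hmin X →
    ∀ w ∈ closedBall x (C * t),
      (Metric.infDist w (affineSpan ℝ (Set.range X) : Set (Euc m)) / t) ^ p ≤
        c * C ^ ℓ * t ^ (n * (n+1)) * K (Fin.snoc X w) ^ p
  homog : ∀ lam > (0:ℝ), ∀ X : Fin (n+2) → Euc m,
    lam ^ (n * (n+1)) * K (fun i => lam • X i) ^ p = K X ^ p
  transl : ∀ b : Euc m, ∀ X : Fin (n+2) → Euc m, K (fun i => X i + b) = K X

/-- The set of `n`-dimensional affine subspaces of `ℝ^m`. -/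
def nPlanes (m n : ℕ) : Set (AffineSubspace ℝ (Euc m)) :=
  {L | (L : Set (Euc m)).Nonempty ∧ Module.finrank ℝ L.direction = n}

/-- Jones' beta number `β^n_{μ;p}(x,r)`. -/
def beta {m : ℕ} (n : ℕ) (p : ℝ) (μ : Measure (Euc m)) (x : Euc m) (r : ℝ) : ℝ≥0∞ :=
  ⨅ L ∈ nPlanes m n,
    ((∫⁻ y in closedBall x r,
        ENNReal.ofReal ((Metric.infDist y (L : Set (Euc m)) / r) ^ p) ∂μ)
      / ENNReal.ofReal (r ^ n)) ^ (1 / p)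

/-- The centered beta number `β̂^n_{μ;p}(x,r)`, where the planes must pass through `x`. -/
def betaHat {m : ℕ} (n : ℕ) (p : ℝ) (μ : Measure (Euc m)) (x : Euc m) (r : ℝ) : ℝ≥0∞ :=
  ⨅ L ∈ {L ∈ nPlanes m n | x ∈ L},
    ((∫⁻ y in closedBall x r,
        ENNReal.ofReal ((Metric.infDist y (L : Set (Euc m)) / r) ^ p) ∂μ)
      / ENNReal.ofReal (r ^ n)) ^ (1 / p)

/-- A measure is countably `n`-rectifiable. -/
def CountablyRectifiable {m : ℕ} (n : ℕ) (μ : Measure (Euc m)) : Prop :=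
  μ ≪ μH[(n : ℝ)] ∧
  ∃ f : ℕ → (EuclideanSpace ℝ (Fin n) → Euc m),
    (∀ i, ∃ L : ℝ≥0, LipschitzWith L (f i)) ∧
    μ (Set.univ \ ⋃ i, Set.range (f i)) = 0

/-- A measure is `n`-purely unrectifiable. -/
def PurelyUnrectifiable {m : ℕ} (n : ℕ) (μ : Measure (Euc m)) : Prop :=
  ∀ f : EuclideanSpace ℝ (Fin n) → Euc m, (∃ L : ℝ≥0, LipschitzWith L f) →
    μ (Set.range f) = 0

/-- `μ` is `n`-Ahlfors upper-regular with constant `C`. -/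
def IsUpperRegular {m : ℕ} (n : ℕ) (μ : Measure (Euc m)) (C : ℝ) : Prop :=
  ∀ x ∈ msupport μ, ∀ r > (0:ℝ), μ (closedBall x r) ≤ ENNReal.ofReal (C * r ^ n)

/-- `μ` is `n`-Ahlfors lower-regular with constant `c`. -/
def IsLowerRegular {m : ℕ} (n : ℕ) (μ : Measure (Euc m)) (c : ℝ) : Prop :=
  ∀ x ∈ msupport μ, ∀ r > (0:ℝ), ENNReal.ofReal r < EMetric.diam (msupport μ) →
    ENNReal.ofReal (c * r ^ n) ≤ μ (closedBall x r)

/-- `μ` is `n`-Ahlfors regular. -/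
def AhlforsRegular {m : ℕ} (n : ℕ) (μ : Measure (Euc m)) : Prop :=
  ∃ c C : ℝ, 0 < c ∧ IsUpperRegular n μ C ∧ IsLowerRegular n μ c

/-- `μ` is uniformly `n`-rectifiable. -/
def UniformlyRectifiable {m : ℕ} (n : ℕ) (μ : Measure (Euc m)) : Prop :=
  AhlforsRegular n μ ∧
  ∃ Λ : ℝ≥0, ∃ θ : ℝ, 0 < θ ∧ θ < 1 ∧
    ∀ x ∈ msupport μ, ∀ r > (0:ℝ),
      ∃ f : EuclideanSpace ℝ (Fin n) → Euc m,
        LipschitzOnWith Λ f (closedBall 0 r) ∧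
        μ (closedBall x r \ f '' (closedBall 0 r)) ≤ ENNReal.ofReal θ * μ (closedBall x r)


def emb : ℝ → Euc 2 := fun t => t • EuclideanSpace.single (0 : Fin 2) (1:ℝ)

lemma emb_apply0 (t : ℝ) : emb t 0 = t := by
  simp [emb, EuclideanSpace.single_apply]

lemma emb_apply1 (t : ℝ) : emb t 1 = 0 := by
  simp [emb, EuclideanSpace.single_apply]

lemma emb_isometry : Isometry emb := by
  intro s t
  simp only [emb, edist_dist, dist_eq_norm, ← sub_smul, norm_smul,
    EuclideanSpace.norm_single, norm_one, mul_one, Real.norm_eq_abs, Real.dist_eq]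

lemma range_emb : Set.range emb = {x : Euc 2 | x 1 = 0} := by
  ext x
  constructor
  · rintro ⟨t, rfl⟩; exact emb_apply1 t
  · intro hx
    refine ⟨x 0, ?_⟩
    rw [WithLp.ext_iff]; funext j
    match j with
    | 0 => exact emb_apply0 _
    | 1 => rw [emb_apply1]; exact hx.symm

lemma emb_measEmb : MeasurableEmbedding emb :=
  emb_isometry.isClosedEmbedding.measurableEmbedding

lemma hmap : (μH[(1:ℝ)] : Measure (Euc 2)).restrict {x : Euc 2 | x 1 = 0}
    = Measure.map emb volume := by
  rw [← range_emb, ← emb_isometry.map_hausdorffMeasure (Or.inl one_pos.le),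
    MeasureTheory.hausdorffMeasure_real]

lemma hS2 : (μH[(2:ℝ)] : Measure (Euc 2)) {x : Euc 2 | x 1 = 0} = 0 := by
  have h : dimH {x : Euc 2 | x 1 = 0} < ((2:ℝ≥0):ℝ≥0∞) := by
    calc dimH {x : Euc 2 | x 1 = 0} = dimH (emb '' Set.univ) := by
          rw [Set.image_univ, range_emb]
      _ ≤ dimH (Set.univ : Set ℝ) := emb_isometry.lipschitz.dimH_image_le _
      _ = 1 := Real.dimH_univ
      _ < _ := by norm_num
  have := hausdorffMeasure_of_dimH_lt h
  simpa using this

lemma convex_S : Convex ℝ {x : Euc 2 | x 1 = 0} := by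
  intro x hx y hy a b _ _ _
  show (a • x + b • y) 1 = 0
  simp only [PiLp.add_apply, PiLp.smul_apply, smul_eq_mul]
  have hx' : x 1 = 0 := hx
  have hy' : y 1 = 0 := hy
  simp [hx', hy']

lemma measS : MeasurableSet {x : Euc 2 | x 1 = 0} := by
  have : Continuous fun x : Euc 2 => x 1 := by
    exact (continuous_apply (1 : Fin 2)).comp (PiLp.continuous_ofLp 2 _)
  exact (isClosed_eq this continuous_const).measurableSet

lemma hf_meas : Measurable fun x : Euc 2 => ENNReal.ofReal |x 0|⁻¹ := by
  have : Measurable fun x : Euc 2 => x 0 := ((continuous_apply (0 : Fin 2)).comp (PiLp.continuous_ofLp 2 _)).measurable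
  exact (this.abs.inv).ennreal_ofReal

/-- Remark after Theorem `meurerRect`: the measure with density `1/|x₁|`
with respect to `H¹` restricted to the line `{x₂ = 0}` in `ℝ²` has vanishing integral Menger
curvature for `K₁` although it is not locally finite at the origin. -/
theorem stmt16 :
    mengerCurv 1 2 (K1 1)
        (((μH[(1:ℝ)] : Measure (Euc 2)).restrict {x : Euc 2 | x 1 = 0}).withDensity
          fun x => ENNReal.ofReal |x 0|⁻¹) = 0 ∧
    ∀ δ > (0:ℝ),
      (((μH[(1:ℝ)] : Measure (Euc 2)).restrict {x : Euc 2 | x 1 = 0}).withDensity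
          fun x => ENNReal.ofReal |x 0|⁻¹) (closedBall 0 δ) = ⊤ := by

  have hmeq : ((μH[(1:ℝ)] : Measure (Euc 2)).restrict {x : Euc 2 | x 1 = 0}).withDensity
      (fun x => ENNReal.ofReal |x 0|⁻¹)
      = (Measure.map emb volume).withDensity (fun x => ENNReal.ofReal |x 0|⁻¹) := by
    rw [hmap]
  haveI : SigmaFinite ((Measure.map emb (volume : Measure ℝ)).withDensity
      (fun x => ENNReal.ofReal |x 0|⁻¹)) := by
    haveI : SigmaFinite (Measure.map emb (volume : Measure ℝ)) :=
      emb_measEmb.sigmaFinite_map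
    exact SigmaFinite.withDensity_of_ne_top' fun x => ENNReal.ofReal_ne_top
  rw [hmeq]
  set ν : Measure (Euc 2) :=
    (Measure.map emb volume).withDensity (fun x => ENNReal.ofReal |x 0|⁻¹) with hν
  constructor
  · -- Menger curvature vanishes
    have hνS : ν {x : Euc 2 | x 1 = 0}ᶜ = 0 := by
      refine withDensity_absolutelyContinuous _ _ ?_
      rw [← hmap, Measure.restrict_apply measS.compl]
      simp
    set π := Measure.pi fun _ : Fin 3 => ν with hπ
    have hae : ∀ᵐ X ∂π, ∀ i : Fin 3, X i ∈ {x : Euc 2 | x 1 = 0} := by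
      rw [MeasureTheory.ae_all_iff]
      intro i
      refine ae_iff.2 (measure_mono_null (fun a ha => ?_)
        (Measure.pi_eval_preimage_null (μ := fun _ : Fin 3 => ν) (i := i) hνS))
      exact ha
    have hzero : (fun X : Fin 3 → Euc 2 => ENNReal.ofReal (K1 1 X ^ (2:ℝ)))
        =ᵐ[π] 0 := by
      filter_upwards [hae] with X hX
      have hsub : convexHull ℝ (Set.range X) ⊆ {x : Euc 2 | x 1 = 0} := by
        refine convexHull_min ?_ convex_S
        rintro y ⟨i, rfl⟩
        exact hX i
      have h0 : μH[((1:ℕ):ℝ)+1] (convexHull ℝ (Set.range X)) = 0 := by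
        have h2 : ((1:ℕ):ℝ)+1 = (2:ℝ) := by norm_num
        rw [h2]
        exact measure_mono_null hsub hS2
      simp only [Pi.zero_apply]
      unfold K1
      rw [if_neg (by rw [h0]; exact lt_irrefl 0)]
      rw [Real.zero_rpow two_ne_zero, ENNReal.ofReal_zero]
    show mengerCurv 1 2 (K1 1) ν = 0
    unfold mengerCurv
    rw [lintegral_congr_ae hzero]
    simp
  · -- not locally finite at 0
    intro δ hδ
    show ν (closedBall 0 δ) = ⊤
    rw [hν, withDensity_apply _ measurableSet_closedBall,
      setLIntegral_map measurableSet_closedBall hf_meas emb_isometry.continuous.measurable]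
    have hpre : emb ⁻¹' closedBall (0 : Euc 2) δ = closedBall (0:ℝ) δ := by
      have h0 : emb 0 = 0 := zero_smul ℝ _
      ext t
      simp only [Set.mem_preimage, mem_closedBall, ← h0, emb_isometry.dist_eq]
    rw [hpre]
    have hIoo : ∫⁻ t in Set.Ioo (0:ℝ) δ, ENNReal.ofReal |emb t 0|⁻¹ ∂volume = ⊤ := by
      have hcong : ∫⁻ t in Set.Ioo (0:ℝ) δ, ENNReal.ofReal |emb t 0|⁻¹ ∂volume
          = ∫⁻ t in Set.Ioo (0:ℝ) δ, ENNReal.ofReal t⁻¹ ∂volume := by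
        refine setLIntegral_congr_fun measurableSet_Ioo (fun t ht => ?_)
        rw [emb_apply0, abs_of_pos ht.1]
      rw [hcong]
      by_contra h
      have hne : ∫⁻ t in Set.Ioo (0:ℝ) δ, ENNReal.ofReal t⁻¹ ∂volume ≠ ⊤ := h
      have hint : IntegrableOn (fun t : ℝ => t⁻¹) (Set.Ioo 0 δ) volume := by
        refine (lintegral_ofReal_ne_top_iff_integrable ?_ ?_).1 hne
        · exact measurable_inv.aestronglyMeasurable
        · exact (ae_restrict_iff' measurableSet_Ioo).2
            (ae_of_all _ fun t ht => inv_nonneg.2 ht.1.le)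
      have hrpow : IntegrableOn (fun t : ℝ => t ^ (-1:ℝ)) (Set.Ioo 0 δ) volume := by
        refine hint.congr_fun (fun t ht => ?_) measurableSet_Ioo
        exact (Real.rpow_neg_one t).symm
      rw [intervalIntegral.integrableOn_Ioo_rpow_iff hδ] at hrpow
      norm_num at hrpow
    refine top_le_iff.1 ?_
    calc (⊤ : ℝ≥0∞) = ∫⁻ t in Set.Ioo (0:ℝ) δ, ENNReal.ofReal |emb t 0|⁻¹ ∂volume :=
          hIoo.symm
      _ ≤ _ := lintegral_mono_set fun t ht =>
          mem_closedBall_zero_iff.2 (by rw [Real.norm_eq_abs, abs_of_pos ht.1]; exact ht.2.le)
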